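/- For every distance distribution function f, the largest quasi-inverse satisfies f∨ = inf_{r ∈ [0,∞]} ε∨(r, f(r)) = inf_{p ∈ [0,1]} ε∨(f∨(p), p) pointwise, where ε∨(r,p)(y) = ∞ if p ≤ y ≤ 1 and ε∨(r,p)(y) = r if 0 ≤ y < p. -/

import Mathlib

open ENNReal Set

/-- A distance distribution function: increasing `f : [0,∞] → [0,1]` with
`f 0 = 0`, `f ∞ = 1`, left continuous on `(0,∞)`. -/
def IsDDF (f : ℝ≥0∞ → ℝ≥0∞) : Prop :=
  Monotone f ∧ (∀ x, f x ≤ 1) ∧ f 0 = 0 ∧ f ⊤ = 1 ∧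
    ∀ x : ℝ≥0∞, 0 < x → x < ⊤ → f x = ⨆ y ∈ Set.Iio x, f y

/-- The largest quasi-inverse `f∨ y = inf {x | f x > y}`. -/
noncomputable def qInv (f : ℝ≥0∞ → ℝ≥0∞) : ℝ≥0∞ → ℝ≥0∞ :=
  fun y => sInf {x | y < f x}

/-- The largest quasi-inverse of the step function `ε(r,p)`:
`ε∨(r,p)(y) = ∞` if `p ≤ y`, and `r` if `y < p`. -/
noncomputable def stepInv (r p : ℝ≥0∞) : ℝ≥0∞ → ℝ≥0∞ :=
  fun y => if p ≤ y then ⊤ else r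

theorem qInv_eq_inf_stepInvs (f : ℝ≥0∞ → ℝ≥0∞) (hf : IsDDF f) :
    (∀ y ∈ Set.Icc (0:ℝ≥0∞) 1, qInv f y = ⨅ r : ℝ≥0∞, stepInv r (f r) y) ∧
    (∀ y ∈ Set.Icc (0:ℝ≥0∞) 1,
      qInv f y = ⨅ p ∈ Set.Icc (0:ℝ≥0∞) 1, stepInv (qInv f p) p y) := by
  obtain ⟨-, hle1, -, -, -⟩ := hf
  constructor
  · intro y _
    apply le_antisymm
    · refine le_iInf fun r => ?_
      by_cases h : f r ≤ y
      · simp [stepInv, h]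
      · have h1 : stepInv r (f r) y = r := if_neg h
        have h2 : qInv f y ≤ r := sInf_le (show r ∈ {x | y < f x} from not_le.mp h)
        exact le_of_le_of_eq h2 h1.symm
    · refine le_sInf fun x hx => ?_
      have h1 : stepInv x (f x) y = x := if_neg (not_le.mpr hx)
      exact h1 ▸ iInf_le _ x
  · intro y _
    apply le_antisymm
    · refine le_iInf₂ fun p _ => ?_
      by_cases h : p ≤ y
      · simp [stepInv, h]
      · have hyp : y < p := not_le.mp h
        have : {x | p < f x} ⊆ {x | y < f x} := fun x hx => hyp.trans hx
        have h2 : stepInv (qInv f p) p y = qInv f p := if_neg h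
        exact le_of_le_of_eq (sInf_le_sInf this) h2.symm
    · refine le_sInf fun x hx => ?_
      obtain ⟨p, hyp, hpf⟩ := exists_between (show y < f x from hx)
      have hp1 : p ≤ 1 := hpf.le.trans (hle1 x)
      have h1 : (⨅ p ∈ Set.Icc (0:ℝ≥0∞) 1, stepInv (qInv f p) p y)
          ≤ stepInv (qInv f p) p y := iInf₂_le p ⟨zero_le, hp1⟩
      have h2 : stepInv (qInv f p) p y = qInv f p := if_neg (not_le.mpr hyp)
      have h3 : qInv f p ≤ x := sInf_le hpf
      exact h1.trans (le_of_eq_of_le h2 h3)
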